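/- Equilateral triangle property of the CRFBP primaries: with masses m₁,m₂,m₃ > 0 summing to 1 and positions p₁, p₂, p₃ ∈ ℝ² given by the explicit formulas (x₁,y₁) = (-|K|√(m₂²+m₂m₃+m₃²)/K, 0), etc., the three mutual distances are equal: |p₁-p₂| = |p₂-p₃| = |p₁-p₃|, and the center of mass is the origin: m₁p₁ + m₂p₂ + m₃p₃ = 0. -/

import Mathlib

/-- Equilateral triangle property of the CRFBP primaries: with masses
`m₁ ≥ m₂ ≥ m₃ > 0` summing to `1` and positions given by the explicit formulas of
the paper, the three mutual distances are equal and the center of mass is the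
origin. -/
theorem crfbp_equilateral_configuration
    (m₁ m₂ m₃ : ℝ) (h3 : 0 < m₃) (h23 : m₃ ≤ m₂) (h12 : m₂ ≤ m₁)
    (hsum : m₁ + m₂ + m₃ = 1)
    (K : ℝ) (hK : K = m₂ * (m₃ - m₂) + m₁ * (m₂ + 2 * m₃)) (hK0 : K ≠ 0)
    (x₁ y₁ x₂ y₂ x₃ y₃ : ℝ)
    (hx₁ : x₁ = -|K| * Real.sqrt (m₂ ^ 2 + m₂ * m₃ + m₃ ^ 2) / K)
    (hy₁ : y₁ = 0)
    (hx₂ : x₂ = |K| * ((m₂ - m₃) * m₃ + m₁ * (2 * m₂ + m₃))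
      / (2 * K * Real.sqrt (m₂ ^ 2 + m₂ * m₃ + m₃ ^ 2)))
    (hy₂ : y₂ = -(Real.sqrt 3 * m₃) / (2 * m₂ ^ ((3:ℝ)/2))
      * Real.sqrt (m₂ ^ 3 / (m₂ ^ 2 + m₂ * m₃ + m₃ ^ 2)))
    (hx₃ : x₃ = |K| / (2 * Real.sqrt (m₂ ^ 2 + m₂ * m₃ + m₃ ^ 2)))
    (hy₃ : y₃ = Real.sqrt 3 / (2 * Real.sqrt m₂)
      * Real.sqrt (m₂ ^ 3 / (m₂ ^ 2 + m₂ * m₃ + m₃ ^ 2))) :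
    (Real.sqrt ((x₁ - x₂) ^ 2 + (y₁ - y₂) ^ 2)
        = Real.sqrt ((x₂ - x₃) ^ 2 + (y₂ - y₃) ^ 2) ∧
      Real.sqrt ((x₂ - x₃) ^ 2 + (y₂ - y₃) ^ 2)
        = Real.sqrt ((x₁ - x₃) ^ 2 + (y₁ - y₃) ^ 2)) ∧
    (m₁ * x₁ + m₂ * x₂ + m₃ * x₃ = 0 ∧ m₁ * y₁ + m₂ * y₂ + m₃ * y₃ = 0) := by
  have h2 : 0 < m₂ := lt_of_lt_of_le h3 h23
  have h1 : 0 < m₁ := lt_of_lt_of_le h2 h12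
  have hS : 0 < m₂ ^ 2 + m₂ * m₃ + m₃ ^ 2 := by positivity
  have hKpos : 0 < K := by rw [hK]; nlinarith
  have habs : |K| = K := abs_of_pos hKpos
  set s := Real.sqrt (m₂ ^ 2 + m₂ * m₃ + m₃ ^ 2) with hsdef
  have hs2 : s ^ 2 = m₂ ^ 2 + m₂ * m₃ + m₃ ^ 2 := Real.sq_sqrt hS.le
  have hspos : 0 < s := Real.sqrt_pos.mpr hS
  have hsne : s ≠ 0 := hspos.ne'
  set t := Real.sqrt 3 with htdef
  have ht : t ^ 2 = 3 := Real.sq_sqrt (by norm_num)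
  have hrm : Real.sqrt (m₂ ^ 3) = m₂ * Real.sqrt m₂ := by
    rw [show m₂ ^ 3 = m₂ ^ 2 * m₂ by ring, Real.sqrt_mul (sq_nonneg m₂),
      Real.sqrt_sq h2.le]
  have hm32 : m₂ ^ ((3:ℝ)/2) = m₂ * Real.sqrt m₂ := by
    rw [show ((3:ℝ)/2) = (3:ℕ) * ((1:ℝ)/2) by norm_num, Real.rpow_natCast_mul h2.le,
      ← Real.sqrt_eq_rpow, ← hrm]
  have hrq : Real.sqrt (m₂ ^ 3 / (m₂ ^ 2 + m₂ * m₃ + m₃ ^ 2)) = m₂ * Real.sqrt m₂ / s := by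
    rw [Real.sqrt_div (by positivity) _, hrm]
  have hsm2 : (0:ℝ) < Real.sqrt m₂ := Real.sqrt_pos.mpr h2
  -- simplified coordinates
  have hx₁' : x₁ = -s := by
    rw [hx₁, habs]; field_simp
  have hx₂' : x₂ = ((m₂ - m₃) * m₃ + m₁ * (2 * m₂ + m₃)) / (2 * s) := by
    rw [hx₂, habs]
    field_simp
  have hx₃' : x₃ = K / (2 * s) := by rw [hx₃, habs]
  have hy₂' : y₂ = -(t * m₃) / (2 * s) := by
    rw [hy₂, hm32, hrq]; field_simp
  have hy₃' : y₃ = t * m₂ / (2 * s) := by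
    rw [hy₃, hrq]; field_simp
  have hm1 : m₁ = 1 - m₂ - m₃ := by linarith
  -- squared distances in closed form
  have e12 : (x₁ - x₂) ^ 2 + (y₁ - y₂) ^ 2
      = ((2 * s ^ 2 + ((m₂ - m₃) * m₃ + m₁ * (2 * m₂ + m₃))) ^ 2 + t ^ 2 * m₃ ^ 2)
        / (4 * s ^ 2) := by
    rw [hx₁', hx₂', hy₁, hy₂']
    field_simp
    ring
  have e23 : (x₂ - x₃) ^ 2 + (y₂ - y₃) ^ 2
      = ((((m₂ - m₃) * m₃ + m₁ * (2 * m₂ + m₃)) - K) ^ 2 + t ^ 2 * (m₂ + m₃) ^ 2)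
        / (4 * s ^ 2) := by
    rw [hx₂', hx₃', hy₂', hy₃']
    field_simp
    ring
  have e13 : (x₁ - x₃) ^ 2 + (y₁ - y₃) ^ 2
      = ((2 * s ^ 2 + K) ^ 2 + t ^ 2 * m₂ ^ 2) / (4 * s ^ 2) := by
    rw [hx₁', hx₃', hy₁, hy₃']
    field_simp
    ring
  refine ⟨⟨?_, ?_⟩, ?_, ?_⟩
  · rw [e12, e23, hs2, ht]
    congr 1
    rw [hK, hm1]
    ring
  · rw [e23, e13, hs2, ht]
    congr 1
    rw [hK, hm1]
    ring
  · have hxsum : m₁ * x₁ + m₂ * x₂ + m₃ * x₃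
        = (-2 * m₁ * s ^ 2 + (m₂ * ((m₂ - m₃) * m₃ + m₁ * (2 * m₂ + m₃)) + m₃ * K))
          / (2 * s) := by
      rw [hx₁', hx₂', hx₃']
      field_simp
      ring
    rw [hxsum, hs2, hK]
    have hz : -2 * m₁ * (m₂ ^ 2 + m₂ * m₃ + m₃ ^ 2)
        + (m₂ * ((m₂ - m₃) * m₃ + m₁ * (2 * m₂ + m₃))
          + m₃ * (m₂ * (m₃ - m₂) + m₁ * (m₂ + 2 * m₃))) = 0 := by ring
    rw [hz, zero_div]
  · rw [hy₁, hy₂', hy₃']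
    field_simp
    ring
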